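/- Let p be a prime, H a pro-p group, A a commutative ring in which p is invertible, B a commutative A-algebra, and M a smooth A[H]-module. Let H act on M ⊗_A B through the first factor (h·(m ⊗ b) = (h·m) ⊗ b), so that M ⊗_A B is a smooth B[H]-module. Then the natural map M^H ⊗_A B → (M ⊗_A B)^H, induced by the inclusion M^H ⊆ M, is an isomorphism. -/

import Mathlib

open scoped TensorProduct

/-- The `Λ`-submodule of `H`-invariant elements of a `Λ[H]`-module `M`. -/
def invariantsSubmodule (H : Type) [Monoid H] (A : Type) [CommRing A] (M : Type)
    [AddCommGroup M] [Module A M] [DistribMulAction H M] [SMulCommClass H A M] :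
    Submodule A M where
  carrier := {m | ∀ h : H, h • m = m}
  add_mem' := fun {a b} ha hb h => by rw [smul_add, ha h, hb h]
  zero_mem' := fun h => smul_zero h
  smul_mem' := fun c m hm h => by rw [smul_comm, hm h]

section Aux

variable {H : Type} [Group H] {A : Type} [CommRing A]
  {M : Type} [AddCommGroup M] [Module A M]

lemma unit_smul_cancel {a : A} (h : IsUnit a) {x y : M} (hxy : a • x = a • y) : x = y := by
  have h2 := congrArg (fun z => ((h.unit⁻¹ : Aˣ) : A) • z) hxy
  simp only [smul_smul] at h2
  have h3 : ((h.unit⁻¹ : Aˣ) : A) * a = 1 := h.val_inv_mul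
  rw [h3, one_smul, one_smul] at h2
  exact h2

variable [DistribMulAction H M] [SMulCommClass H A M]

/-- The action of a coset on an element fixed by `U`. -/
def cosetSmul (U : Subgroup H) {m : M} (hm : ∀ u ∈ U, u • m = m) : H ⧸ U → M :=
  Quotient.lift (fun h => h • m) (fun a b hab => by
    have h1 : a⁻¹ * b ∈ U := QuotientGroup.leftRel_apply.mp hab
    calc a • m = a • ((a⁻¹ * b) • m) := by rw [hm _ h1]
    _ = b • m := by rw [← mul_smul, mul_inv_cancel_left])

lemma cosetSmul_mk (U : Subgroup H) {m : M} (hm : ∀ u ∈ U, u • m = m) (h : H) :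
    cosetSmul U hm (QuotientGroup.mk h) = h • m := rfl

lemma sum_cosetSmul_eq (U V : Subgroup H) [U.Normal] [V.Normal]
    [Fintype (H ⧸ U)] [Fintype (H ⧸ V)] (hUV : U ≤ V) {m : M}
    (hm : ∀ v ∈ V, v • m = m) :
    ∃ k : ℕ, Fintype.card (H ⧸ U) = k * Fintype.card (H ⧸ V) ∧
      ∑ q : H ⧸ U, cosetSmul U (fun u hu => hm u (hUV hu)) q
        = k • ∑ r : H ⧸ V, cosetSmul V hm r := by
  classical
  set π : H ⧸ U →* H ⧸ V := QuotientGroup.map U V (MonoidHom.id H) (fun x hx => hUV hx) with hπ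
  have hπmk : ∀ h : H, π (QuotientGroup.mk h) = QuotientGroup.mk h := fun h =>
    QuotientGroup.map_mk (N := U) V (MonoidHom.id H) (fun x hx => hUV hx) h
  set k : ℕ := (Finset.univ.filter fun q : H ⧸ U => π q = 1).card with hk
  have hfib : ∀ r : H ⧸ V, (Finset.univ.filter fun q : H ⧸ U => π q = r).card = k := by
    intro r
    set g : H := Quotient.out r with hg
    have hgr : π (QuotientGroup.mk g) = r := by
      rw [hπmk]; exact QuotientGroup.out_eq' r
    apply Finset.card_bij' (fun q _ => (QuotientGroup.mk g : H ⧸ U)⁻¹ * q)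
      (fun q _ => (QuotientGroup.mk g : H ⧸ U) * q)
    · intro q hq
      simp only [Finset.mem_filter, Finset.mem_univ, true_and] at hq ⊢
      rw [map_mul, map_inv, hgr, hq, inv_mul_cancel]
    · intro q hq
      simp only [Finset.mem_filter, Finset.mem_univ, true_and] at hq ⊢
      rw [map_mul, hgr, hq, mul_one]
    · intro q _; rw [mul_inv_cancel_left]
    · intro q _; rw [inv_mul_cancel_left]
  have hcard : Fintype.card (H ⧸ U) = k * Fintype.card (H ⧸ V) := by
    rw [← Finset.card_univ, Finset.card_eq_sum_card_fiberwise
      (fun q _ => Finset.mem_univ (π q))]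
    rw [Finset.sum_congr rfl (fun r _ => hfib r), Finset.sum_const, Finset.card_univ,
      smul_eq_mul, mul_comm]
  refine ⟨k, hcard, ?_⟩
  have hcompat : ∀ q : H ⧸ U, cosetSmul U (fun u hu => hm u (hUV hu)) q
      = cosetSmul V hm (π q) := by
    intro q
    induction q using QuotientGroup.induction_on with
    | _ h => rw [hπmk]; rfl
  rw [← Finset.sum_fiberwise_of_maps_to (fun (q : H ⧸ U) _ => Finset.mem_univ (π q))
    (cosetSmul U (fun u hu => hm u (hUV hu)))]
  rw [Finset.smul_sum]
  refine Finset.sum_congr rfl (fun r _ => ?_)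
  rw [Finset.sum_congr rfl (fun q hq => by
    rw [hcompat q, (Finset.mem_filter.mp hq).2]), Finset.sum_const, hfib r]

lemma normalCore_isOpen' {H : Type} [Group H] [TopologicalSpace H] [IsTopologicalGroup H]
    [CompactSpace H] (S : Subgroup H) (hS : IsOpen (S : Set H)) :
    IsOpen ((S.normalCore : Subgroup H) : Set H) := by
  have h1 : Finite (H ⧸ S) := S.quotient_finite_of_isOpen hS
  have h2 : S.FiniteIndex := S.finiteIndex_of_finite_quotient
  exact Subgroup.isOpen_of_isClosed_of_finiteIndex _
    (S.normalCore_isClosed (S.isClosed_of_isOpen hS))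

lemma finset_inf_normal_isOpen {H : Type} [Group H] [TopologicalSpace H] {ι : Type}
    (S : Finset ι) (f : ι → Subgroup H) (hn : ∀ i, (f i).Normal)
    (ho : ∀ i, IsOpen ((f i : Subgroup H) : Set H)) :
    (S.inf f).Normal ∧ IsOpen ((S.inf f : Subgroup H) : Set H) := by
  classical
  induction S using Finset.induction_on with
  | empty =>
    rw [Finset.inf_empty]
    exact ⟨(inferInstance : (⊤ : Subgroup H).Normal), by rw [Subgroup.coe_top]; exact isOpen_univ⟩
  | insert _ _ hx ih =>
    rw [Finset.inf_insert]
    refine ⟨@Subgroup.normal_inf_normal _ _ _ _ (hn _) ih.1, ?_⟩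
    rw [Subgroup.coe_inf]
    exact (ho _).inter ih.2

end Aux

theorem invariants_tensor (p : ℕ) (hp : p.Prime)
    (H : Type) [Group H] [TopologicalSpace H] [IsTopologicalGroup H]
    [CompactSpace H] [T2Space H] [TotallyDisconnectedSpace H]
    (hH : ∀ N : Subgroup H, N.Normal → IsOpen (N : Set H) →
      ∃ n : ℕ, Nat.card (H ⧸ N) = p ^ n)
    (A : Type) [CommRing A] (hA : IsUnit (p : A))
    (B : Type) [CommRing B] [Algebra A B]
    (M : Type) [AddCommGroup M] [Module A M] [DistribMulAction H M] [SMulCommClass H A M]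
    (hsm : ∀ x : M, IsOpen ((MulAction.stabilizer H x : Subgroup H) : Set H)) :
    Function.Injective
      (TensorProduct.map (invariantsSubmodule H A M).subtype (LinearMap.id : B →ₗ[A] B)) ∧
    Set.range
      (TensorProduct.map (invariantsSubmodule H A M).subtype (LinearMap.id : B →ₗ[A] B)) =
    {z : M ⊗[A] B | ∀ h : H,
      TensorProduct.map (DistribMulAction.toLinearMap A M h) (LinearMap.id : B →ₗ[A] B) z = z} := by
  classical
  set N : M → Subgroup H := fun m => (MulAction.stabilizer H m).normalCore with hNdef
  have hNn : ∀ m, (N m).Normal := fun m => Subgroup.normalCore_normal _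
  have hNo : ∀ m, IsOpen ((N m : Subgroup H) : Set H) := fun m => normalCore_isOpen' _ (hsm m)
  have hNfix : ∀ m : M, ∀ u ∈ N m, u • m = m := fun m u hu =>
    (Subgroup.normalCore_le _ hu : u ∈ MulAction.stabilizer H m)
  have hcard : ∀ U : Subgroup H, U.Normal → IsOpen ((U : Subgroup H) : Set H) →
      IsUnit ((Nat.card (H ⧸ U) : A)) := by
    intro U hn ho
    obtain ⟨n, hn'⟩ := hH U hn ho
    rw [hn']
    push_cast
    exact hA.pow n
  -- the averaging operator
  have hEx : ∃ E : M → M, ∀ (m : M) (U : Subgroup H) (hn : U.Normal)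
      (ho : IsOpen ((U : Subgroup H) : Set H)) (hm : ∀ u ∈ U, u • m = m),
      (Nat.card (H ⧸ U) : A) • E m = ∑ᶠ q : H ⧸ U, cosetSmul U hm q := by
    refine ⟨fun m => (((hcard (N m) (hNn m) (hNo m)).unit⁻¹ : Aˣ) : A) •
        ∑ᶠ q : H ⧸ N m, cosetSmul (N m) (hNfix m) q, ?_⟩
    intro m U hn ho hm
    simp only []
    haveI := hn
    haveI := hNn m
    haveI : Finite (H ⧸ U) := U.quotient_finite_of_isOpen ho
    haveI : Finite (H ⧸ N m) := (N m).quotient_finite_of_isOpen (hNo m)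
    haveI hWn : (U ⊓ N m).Normal := Subgroup.normal_inf_normal U (N m)
    have hWo : IsOpen ((U ⊓ N m : Subgroup H) : Set H) := by
      rw [Subgroup.coe_inf]; exact ho.inter (hNo m)
    haveI : Finite (H ⧸ (U ⊓ N m)) := (U ⊓ N m).quotient_finite_of_isOpen hWo
    haveI : Fintype (H ⧸ U) := Fintype.ofFinite _
    haveI : Fintype (H ⧸ N m) := Fintype.ofFinite _
    haveI : Fintype (H ⧸ (U ⊓ N m)) := Fintype.ofFinite _
    rw [finsum_eq_sum_of_fintype, finsum_eq_sum_of_fintype]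
    obtain ⟨k₁, hk₁c, hk₁s⟩ := sum_cosetSmul_eq (U ⊓ N m) U inf_le_left hm
    obtain ⟨k₂, hk₂c, hk₂s⟩ := sum_cosetSmul_eq (U ⊓ N m) (N m) inf_le_right (hNfix m)
    set SU := ∑ q : H ⧸ U, cosetSmul U hm q with hSU
    set SV := ∑ r : H ⧸ N m, cosetSmul (N m) (hNfix m) r with hSV
    have hks : (k₁ : A) • SU = (k₂ : A) • SV := by
      rw [Nat.cast_smul_eq_nsmul, Nat.cast_smul_eq_nsmul]
      exact hk₁s.symm.trans hk₂s
    have hv := hcard (N m) (hNn m) (hNo m)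
    have hw := hcard (U ⊓ N m) hWn hWo
    have hnU : (Nat.card (H ⧸ U)) = Fintype.card (H ⧸ U) := Nat.card_eq_fintype_card
    have hnV : (Nat.card (H ⧸ N m)) = Fintype.card (H ⧸ N m) := Nat.card_eq_fintype_card
    have hnW : (Nat.card (H ⧸ (U ⊓ N m))) = Fintype.card (H ⧸ (U ⊓ N m)) :=
      Nat.card_eq_fintype_card
    have hmulA : (k₁ : A) * (Nat.card (H ⧸ U) : A)
        = (k₂ : A) * (Nat.card (H ⧸ N m) : A) := by
      have h0 := congrArg (fun t : ℕ => (t : A)) (hk₁c.symm.trans hk₂c)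
      push_cast at h0
      rw [hnU, hnV]
      exact_mod_cast h0
    have hk₁u : IsUnit ((k₁ : A)) := by
      rw [hnW, hk₁c] at hw
      push_cast at hw
      exact isUnit_of_mul_isUnit_left hw
    apply unit_smul_cancel (hk₁u.mul hv)
    have h1 : (Nat.card (H ⧸ N m) : A) * (((hcard (N m) (hNn m) (hNo m)).unit⁻¹ : Aˣ) : A)
        = 1 := (hcard (N m) (hNn m) (hNo m)).mul_val_inv
    calc ((k₁ : A) * (Nat.card (H ⧸ N m) : A)) • ((Nat.card (H ⧸ U) : A)
          • ((((hcard (N m) (hNn m) (hNo m)).unit⁻¹ : Aˣ) : A) • SV))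
        = (((k₁ : A) * (Nat.card (H ⧸ N m) : A)) * ((Nat.card (H ⧸ U) : A)
            * (((hcard (N m) (hNn m) (hNo m)).unit⁻¹ : Aˣ) : A))) • SV := by
          rw [smul_smul, smul_smul, mul_assoc]
      _ = (((k₁ : A) * (Nat.card (H ⧸ U) : A)) * ((Nat.card (H ⧸ N m) : A)
            * (((hcard (N m) (hNn m) (hNo m)).unit⁻¹ : Aˣ) : A))) • SV := by
          congr 1; ring
      _ = ((k₁ : A) * (Nat.card (H ⧸ U) : A)) • SV := by rw [h1, mul_one]
      _ = ((k₂ : A) * (Nat.card (H ⧸ N m) : A)) • SV := by rw [hmulA]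
      _ = (Nat.card (H ⧸ N m) : A) • ((k₂ : A) • SV) := by rw [smul_smul, mul_comm]
      _ = (Nat.card (H ⧸ N m) : A) • ((k₁ : A) • SU) := by rw [← hks]
      _ = ((k₁ : A) * (Nat.card (H ⧸ N m) : A)) • SU := by rw [smul_smul, mul_comm]
  obtain ⟨E, hEgen⟩ := hEx
  -- E lands in invariants
  have hEinv : ∀ (m : M) (g : H), g • E m = E m := by
    intro m g
    haveI := hNn m
    haveI : Finite (H ⧸ N m) := (N m).quotient_finite_of_isOpen (hNo m)
    haveI : Fintype (H ⧸ N m) := Fintype.ofFinite _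
    have h1 := hEgen m (N m) (hNn m) (hNo m) (hNfix m)
    rw [finsum_eq_sum_of_fintype] at h1
    apply unit_smul_cancel (hcard (N m) (hNn m) (hNo m))
    rw [← smul_comm g ((Nat.card (H ⧸ N m) : ℕ) : A) (E m), h1, Finset.smul_sum]
    have hmove : ∀ q : H ⧸ N m, g • cosetSmul (N m) (hNfix m) q
        = cosetSmul (N m) (hNfix m) ((QuotientGroup.mk g : H ⧸ N m) * q) := by
      intro q
      induction q using QuotientGroup.induction_on with
      | _ h =>
        calc g • cosetSmul (N m) (hNfix m) (QuotientGroup.mk h) = (g * h) • m := by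
              rw [cosetSmul_mk, mul_smul]
        _ = cosetSmul (N m) (hNfix m) (QuotientGroup.mk (g * h)) :=
              (cosetSmul_mk (N m) (hNfix m) (g * h)).symm
        _ = _ := by rw [QuotientGroup.mk_mul]
    rw [Finset.sum_congr rfl (fun q _ => hmove q)]
    exact Equiv.sum_comp (Equiv.mulLeft ((QuotientGroup.mk g : H ⧸ N m))) _
  -- E fixes invariants
  have hEfix : ∀ m : M, (∀ h : H, h • m = m) → E m = m := by
    intro m hm'
    have h1 := hEgen m ⊤ inferInstance (by rw [Subgroup.coe_top]; exact isOpen_univ)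
      (fun u _ => hm' u)
    haveI : Subsingleton (H ⧸ (⊤ : Subgroup H)) := QuotientGroup.subsingleton_quotient_top
    haveI : Fintype (H ⧸ (⊤ : Subgroup H)) := Fintype.ofFinite _
    rw [finsum_eq_sum_of_fintype] at h1
    have hcd : Nat.card (H ⧸ (⊤ : Subgroup H)) = 1 :=
      Nat.card_eq_one_iff_unique.mpr ⟨inferInstance, ⟨1⟩⟩
    rw [hcd, Nat.cast_one, one_smul] at h1
    have h2 : ∀ q : H ⧸ (⊤ : Subgroup H), cosetSmul ⊤ (fun u _ => hm' u) q = m := by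
      intro q
      induction q using QuotientGroup.induction_on with
      | _ h => rw [cosetSmul_mk]; exact hm' h
    rw [Finset.sum_congr rfl (fun q _ => h2 q), Finset.sum_const, Finset.card_univ] at h1
    have h3 : Fintype.card (H ⧸ (⊤ : Subgroup H)) = 1 := by
      rw [← Nat.card_eq_fintype_card, hcd]
    rw [h3, one_smul] at h1
    exact h1
  -- E is additive
  have hEadd : ∀ m m' : M, E (m + m') = E m + E m' := by
    intro m m'
    haveI := hNn m
    haveI := hNn m'
    haveI hUn : (N m ⊓ N m').Normal := Subgroup.normal_inf_normal _ _
    have hUo : IsOpen ((N m ⊓ N m' : Subgroup H) : Set H) := by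
      rw [Subgroup.coe_inf]; exact (hNo m).inter (hNo m')
    haveI : Finite (H ⧸ (N m ⊓ N m')) := (N m ⊓ N m').quotient_finite_of_isOpen hUo
    haveI : Fintype (H ⧸ (N m ⊓ N m')) := Fintype.ofFinite _
    have hm1 : ∀ u ∈ N m ⊓ N m', u • m = m := fun u hu => hNfix m u (Subgroup.mem_inf.mp hu).1
    have hm2 : ∀ u ∈ N m ⊓ N m', u • m' = m' := fun u hu => hNfix m' u (Subgroup.mem_inf.mp hu).2
    have hm3 : ∀ u ∈ N m ⊓ N m', u • (m + m') = m + m' := fun u hu => by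
      rw [smul_add, hm1 u hu, hm2 u hu]
    have h1 := hEgen (m + m') (N m ⊓ N m') hUn hUo hm3
    have h2 := hEgen m (N m ⊓ N m') hUn hUo hm1
    have h3 := hEgen m' (N m ⊓ N m') hUn hUo hm2
    rw [finsum_eq_sum_of_fintype] at h1 h2 h3
    apply unit_smul_cancel (hcard (N m ⊓ N m') hUn hUo)
    rw [h1, smul_add, h2, h3, ← Finset.sum_add_distrib]
    refine Finset.sum_congr rfl (fun q _ => ?_)
    induction q using QuotientGroup.induction_on with
    | _ h => rw [cosetSmul_mk, cosetSmul_mk, cosetSmul_mk, smul_add]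
  -- E commutes with scalars
  have hEsmul : ∀ (a : A) (m : M), E (a • m) = a • E m := by
    intro a m
    haveI := hNn m
    haveI : Finite (H ⧸ N m) := (N m).quotient_finite_of_isOpen (hNo m)
    haveI : Fintype (H ⧸ N m) := Fintype.ofFinite _
    have hma : ∀ u ∈ N m, u • (a • m) = a • m := fun u hu => by
      rw [smul_comm, hNfix m u hu]
    have h1 := hEgen (a • m) (N m) (hNn m) (hNo m) hma
    have h2 := hEgen m (N m) (hNn m) (hNo m) (hNfix m)
    rw [finsum_eq_sum_of_fintype] at h1 h2
    apply unit_smul_cancel (hcard (N m) (hNn m) (hNo m))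
    rw [h1, smul_comm (Nat.card (H ⧸ N m) : A) a, h2, Finset.smul_sum]
    refine Finset.sum_congr rfl (fun q _ => ?_)
    induction q using QuotientGroup.induction_on with
    | _ h => rw [cosetSmul_mk, cosetSmul_mk, smul_comm]
  -- package into a linear retraction
  let r : M →ₗ[A] ↥(invariantsSubmodule H A M) :=
    { toFun := fun m => ⟨E m, fun g => hEinv m g⟩
      map_add' := fun m m' => Subtype.ext (hEadd m m')
      map_smul' := fun a m => Subtype.ext (hEsmul a m) }
  have hrs : ∀ n : ↥(invariantsSubmodule H A M), r (n : M) = n := fun n =>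
    Subtype.ext (hEfix n.1 n.2)
  have hEbar : ∀ m : M, ((invariantsSubmodule H A M).subtype ∘ₗ r) m = E m := fun m => rfl
  have hcomp : (TensorProduct.map r (LinearMap.id : B →ₗ[A] B)).comp
      (TensorProduct.map (invariantsSubmodule H A M).subtype (LinearMap.id : B →ₗ[A] B))
      = LinearMap.id := by
    rw [← TensorProduct.map_comp]
    have h1 : r ∘ₗ (invariantsSubmodule H A M).subtype = LinearMap.id :=
      LinearMap.ext fun n => hrs n
    rw [h1, LinearMap.id_comp, TensorProduct.map_id]
  constructor
  · intro x y hxy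
    have h2 := congrArg (TensorProduct.map r (LinearMap.id : B →ₗ[A] B)) hxy
    rwa [← LinearMap.comp_apply, ← LinearMap.comp_apply, hcomp, LinearMap.id_apply,
      LinearMap.id_apply] at h2
  · apply Set.Subset.antisymm
    · rintro z ⟨w, rfl⟩
      intro g
      rw [← LinearMap.comp_apply, ← TensorProduct.map_comp]
      have h1 : (DistribMulAction.toLinearMap A M g) ∘ₗ (invariantsSubmodule H A M).subtype
          = (invariantsSubmodule H A M).subtype := LinearMap.ext fun n => n.2 g
      rw [h1, LinearMap.id_comp]
    · intro z hz
      obtain ⟨S, hSz⟩ := TensorProduct.exists_finset (R := A) z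
      obtain ⟨hUn, hUo⟩ := finset_inf_normal_isOpen S (fun i => N i.1)
        (fun i => hNn _) (fun i => hNo _)
      haveI := hUn
      haveI : Finite (H ⧸ S.inf fun i => N i.1) :=
        (S.inf fun i => N i.1).quotient_finite_of_isOpen hUo
      haveI : Fintype (H ⧸ S.inf fun i => N i.1) := Fintype.ofFinite _
      have hUfix : ∀ i ∈ S, ∀ u ∈ S.inf fun i => N i.1, u • i.1 = i.1 := fun i hi u hu =>
        hNfix i.1 u ((Finset.inf_le (f := fun i : M × B => N i.1) hi : (S.inf fun i => N i.1) ≤ N i.1) hu)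
      have hcu := hcard _ hUn hUo
      have key : (Nat.card (H ⧸ S.inf fun i => N i.1) : A) •
          (TensorProduct.map ((invariantsSubmodule H A M).subtype ∘ₗ r)
            (LinearMap.id : B →ₗ[A] B)) z
          = (Nat.card (H ⧸ S.inf fun i => N i.1) : A) • z := by
        conv_lhs => rw [hSz]
        rw [map_sum, Finset.smul_sum]
        have step1 : ∀ i ∈ S, (Nat.card (H ⧸ S.inf fun i => N i.1) : A) •
            (TensorProduct.map ((invariantsSubmodule H A M).subtype ∘ₗ r)
              (LinearMap.id : B →ₗ[A] B)) (i.1 ⊗ₜ[A] i.2)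
            = ∑ q : H ⧸ S.inf fun i => N i.1, (Quotient.out q • i.1) ⊗ₜ[A] i.2 := by
          intro i hi
          rw [TensorProduct.map_tmul, hEbar, LinearMap.id_apply, TensorProduct.smul_tmul']
          have h1 := hEgen i.1 _ hUn hUo (hUfix i hi)
          rw [finsum_eq_sum_of_fintype] at h1
          rw [h1, TensorProduct.sum_tmul]
          refine Finset.sum_congr rfl (fun q _ => ?_)
          congr 1
          conv_lhs => rw [← QuotientGroup.out_eq' q]
          rw [cosetSmul_mk]
        rw [Finset.sum_congr rfl step1, Finset.sum_comm]
        have hinner : ∀ q : H ⧸ S.inf fun i => N i.1,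
            ∑ i ∈ S, (Quotient.out q • i.1) ⊗ₜ[A] i.2 = z := by
          intro q
          have h2 := hz (Quotient.out q)
          calc ∑ i ∈ S, (Quotient.out q • i.1) ⊗ₜ[A] i.2
              = TensorProduct.map (DistribMulAction.toLinearMap A M (Quotient.out q))
                  (LinearMap.id : B →ₗ[A] B) z := by
                conv_rhs => rw [hSz]
                rw [map_sum]
                exact Finset.sum_congr rfl (fun i _ => by
                  rw [TensorProduct.map_tmul,
                    LinearMap.id_apply]; rfl)
            _ = z := h2
        rw [Finset.sum_congr rfl (fun q _ => hinner q), Finset.sum_const, Finset.card_univ,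
          ← Nat.card_eq_fintype_card, ← Nat.cast_smul_eq_nsmul (R := A)]
      have hz2 : (TensorProduct.map ((invariantsSubmodule H A M).subtype ∘ₗ r)
          (LinearMap.id : B →ₗ[A] B)) z = z := unit_smul_cancel hcu key
      refine ⟨TensorProduct.map r (LinearMap.id : B →ₗ[A] B) z, ?_⟩
      rw [← LinearMap.comp_apply, ← TensorProduct.map_comp, LinearMap.id_comp]
      exact hz2
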